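/- Let X be an infinite compact metric space and let a countable group G act on X minimally by homeomorphisms. Then for every countable subset C ⊆ X and every finite subset F ⊆ X, there exists a sequence (g_n) in G and a finite set K ⊆ X such that g_n F → K in the Hausdorff metric and K ∩ C = ∅. -/
import Mathlib


open Filter Metric

/-- Escaping Lemma: for a minimal action of a countable group on
an infinite compact metric space, any finite set can be moved (in the Hausdorff
metric) towards a finite limit set avoiding a given countable set. -/
theorem stmt14 {X : Type*} [MetricSpace X] [CompactSpace X] [Infinite X]
    {G : Type*} [Group G] [Countable G] (φ : G → (X ≃ₜ X))
    (hφ : ∀ g h : G, ∀ x : X, φ (g * h) x = φ g (φ h x))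
    (hmin : ∀ x : X, Dense (Set.range fun g : G => φ g x))
    (C : Set X) (hC : C.Countable)
    (F : Set X) (hF : F.Finite) (hFne : F.Nonempty) :
    ∃ (g : ℕ → G) (K : Set X), K.Finite ∧ K.Nonempty ∧
      Tendsto (fun n => hausdorffDist (φ (g n) '' F) K) atTop (nhds 0) ∧
      K ∩ C = ∅ := by
  classical
  haveI : Fintype ↥F := hF.fintype
  haveI : Nonempty ↥F := hFne.to_subtype
  -- basic identities about the action
  have h1 : ∀ x : X, φ 1 x = x := by
    intro x
    have h := (hφ 1 1 x).symm
    rw [one_mul] at h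
    exact (φ 1).injective h
  have hinv : ∀ (g : G) (x : X), φ g⁻¹ (φ g x) = x := by
    intro g x
    rw [← hφ, inv_mul_cancel, h1]
  -- the diagonal action on tuples
  let σ : G → (↥F → X) → ↥F → X := fun g t i => φ g (t i)
  have hσcont : ∀ g : G, Continuous (σ g) :=
    fun g => continuous_pi fun i => (φ g).continuous.comp (continuous_apply i)
  have hσmul : ∀ (g h : G) (t : ↥F → X), σ (g * h) t = σ g (σ h t) := by
    intro g h t
    funext i
    exact hφ g h (t i)
  have hσ1 : ∀ t : ↥F → X, σ 1 t = t := by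
    intro t; funext i; exact h1 (t i)
  -- the base tuple
  let a : ↥F → X := fun i => (i : X)
  -- the orbit closure of `a`
  let A₀ : Set (↥F → X) := closure (Set.range fun g => σ g a)
  have haA₀ : a ∈ A₀ := subset_closure ⟨1, hσ1 a⟩
  -- invariant nonempty closed subsets
  let S : Set (Set (↥F → X)) :=
    {A | A ⊆ A₀ ∧ A.Nonempty ∧ IsClosed A ∧ ∀ g : G, Set.MapsTo (σ g) A A}
  have horbS : ∀ t ∈ A₀, closure (Set.range fun g => σ g t) ∈ S := by
    intro t ht
    have hmaps : ∀ g : G, Set.MapsTo (σ g) (Set.range fun g' => σ g' t)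
        (Set.range fun g' => σ g' t) := by
      rintro g _ ⟨g', rfl⟩
      exact ⟨g * g', hσmul g g' t⟩
    have hsubA₀ : closure (Set.range fun g => σ g t) ⊆ A₀ := by
      apply closure_minimal _ isClosed_closure
      rintro _ ⟨g, rfl⟩
      -- σ g t ∈ A₀ since A₀ is invariant (image of closure under continuous map)
      have hA₀inv : Set.MapsTo (σ g) A₀ A₀ := by
        have : Set.MapsTo (σ g) (Set.range fun g' => σ g' a)
            (Set.range fun g' => σ g' a) := by
          rintro _ ⟨g', rfl⟩
          exact ⟨g * g', hσmul g g' a⟩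
        exact this.closure (hσcont g)
      exact hA₀inv ht
    refine ⟨hsubA₀, ⟨t, subset_closure ⟨1, hσ1 t⟩⟩, isClosed_closure, ?_⟩
    intro g
    exact ((hmaps g).closure (hσcont g))
  have hA₀S : A₀ ∈ S := by
    have := horbS a haA₀
    have heq : closure (Set.range fun g => σ g a) = A₀ := rfl
    rwa [heq] at this
  -- Zorn: a minimal invariant set T' inside A₀
  have Hz : ∀ c ⊆ S, IsChain (· ⊆ ·) c → c.Nonempty →
      ∃ lb ∈ S, ∀ s ∈ c, lb ⊆ s := by
    intro c hcS hchain hcne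
    refine ⟨⋂₀ c, ?_, fun s hs => Set.sInter_subset_of_mem hs⟩
    haveI : Nonempty ↥c := hcne.to_subtype
    have hne : (⋂₀ c).Nonempty := by
      rw [Set.sInter_eq_iInter]
      apply IsCompact.nonempty_iInter_of_directed_nonempty_isCompact_isClosed
      · rintro ⟨s, hs⟩ ⟨t, ht⟩
        rcases hchain.total hs ht with h | h
        · exact ⟨⟨s, hs⟩, le_refl _, h⟩
        · exact ⟨⟨t, ht⟩, h, le_refl _⟩
      · exact fun s => (hcS s.2).2.1
      · exact fun s => (hcS s.2).2.2.1.isCompact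
      · exact fun s => (hcS s.2).2.2.1
    obtain ⟨s₀, hs₀⟩ := hcne
    refine ⟨(Set.sInter_subset_of_mem hs₀).trans (hcS hs₀).1, hne,
      isClosed_sInter fun s hs => (hcS hs).2.2.1, ?_⟩
    intro g x hx
    rw [Set.mem_sInter] at hx ⊢
    exact fun s hs => (hcS hs).2.2.2 g (hx s hs)
  obtain ⟨T', hT'sub, hT'S, hT'min⟩ : ∃ m, m ⊆ A₀ ∧ Minimal (· ∈ S) m :=
    zorn_superset_nonempty S Hz A₀ hA₀S
  obtain ⟨hT'A₀, hT'ne, hT'closed, hT'inv⟩ := hT'S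
  have hT'cpt : IsCompact T' := hT'closed.isCompact
  -- minimality: every orbit closure in T' is all of T'
  have hT'minimal : ∀ t ∈ T', closure (Set.range fun g => σ g t) = T' := by
    intro t ht
    have hmem : closure (Set.range fun g => σ g t) ∈ S := horbS t (hT'A₀ ht)
    have hsub : closure (Set.range fun g => σ g t) ⊆ T' := by
      apply closure_minimal _ hT'closed
      rintro _ ⟨g, rfl⟩
      exact hT'inv g ht
    exact subset_antisymm hsub (hT'min hmem hsub)
  -- key step: there is a tuple in T' avoiding C
  have key : ∃ t ∈ T', ∀ i, t i ∉ C := by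
    by_contra hcon
    push_neg at hcon
    -- Baire category on the compact metric space T'
    haveI : Nonempty ↥T' := hT'ne.to_subtype
    haveI : CompleteSpace ↥T' := hT'closed.completeSpace_coe
    haveI : Countable ↥C := hC.to_subtype
    set f : ↥C × ↥F → Set ↥T' := fun p => {t | (t : ↥F → X) p.2 = (p.1 : X)} with hf
    have hfc : ∀ p, IsClosed (f p) := by
      intro p
      exact isClosed_eq ((continuous_apply p.2).comp continuous_subtype_val)
        continuous_const
    have hfU : ⋃ p, f p = Set.univ := by
      ext t
      simp only [Set.mem_iUnion, Set.mem_univ, iff_true]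
      obtain ⟨i, hi⟩ := hcon t.1 t.2
      exact ⟨⟨⟨t.1 i, hi⟩, i⟩, rfl⟩
    obtain ⟨⟨⟨c, hcC⟩, j⟩, hInt⟩ := nonempty_interior_of_iUnion_of_closed hfc hfU
    obtain ⟨t₀, ht₀⟩ := hInt
    -- translate to an open set in the ambient space
    obtain ⟨U, hUopen, hUeq⟩ :
        ∃ U : Set (↥F → X), IsOpen U ∧
          Subtype.val ⁻¹' U = interior (f (⟨c, hcC⟩, j)) := by
      have := isOpen_interior (s := f (⟨c, hcC⟩, j))
      rwa [isOpen_induced_iff] at this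
    have ht₀U : (t₀ : ↥F → X) ∈ U := by
      rw [← Set.mem_preimage, hUeq]; exact ht₀
    have hUc : ∀ s ∈ T', s ∈ U → s j = c := by
      intro s hs hsU
      have hmem' : (⟨s, hs⟩ : ↥T') ∈ interior (f (⟨c, hcC⟩, j)) := by
        rw [← hUeq]; exact hsU
      have hmem2 : (⟨s, hs⟩ : ↥T') ∈ f (⟨c, hcC⟩, j) := interior_subset hmem'
      exact hmem2
    -- T' is covered by translates of U
    have hcover : T' ⊆ ⋃ g : G, σ g ⁻¹' U := by
      intro t ht
      have ht₀T' : (t₀ : ↥F → X) ∈ closure (Set.range fun g => σ g t) := by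
        rw [hT'minimal t ht]; exact t₀.2
      rw [_root_.mem_closure_iff] at ht₀T'
      obtain ⟨_, hgU, g, rfl⟩ := ht₀T' U hUopen ht₀U
      exact Set.mem_iUnion.2 ⟨g, hgU⟩
    obtain ⟨s, hscover⟩ := hT'cpt.elim_finite_subcover (fun g : G => σ g ⁻¹' U)
      (fun g => hUopen.preimage (hσcont g)) hcover
    -- every tuple in T' has j-th coordinate in the finite set D
    set D : Set X := (fun g : G => φ g⁻¹ c) '' ↑s with hD
    have hDfin : D.Finite := s.finite_toSet.image _
    have hjD : ∀ t ∈ T', t j ∈ D := by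
      intro t ht
      obtain ⟨g, hgs, hgU⟩ := Set.mem_iUnion₂.1 (hscover ht)
      have hgT' : σ g t ∈ T' := hT'inv g ht
      have : σ g t j = c := hUc (σ g t) hgT' hgU
      have htj : t j = φ g⁻¹ c := by
        rw [← this]
        exact (hinv g (t j)).symm
      exact ⟨g, hgs, htj.symm⟩
    -- the orbit of a point is contained in D : contradiction with Infinite X
    obtain ⟨t₁, ht₁⟩ := hT'ne
    have horb : Set.range (fun g : G => φ g (t₁ j)) ⊆ D := by
      rintro _ ⟨g, rfl⟩
      exact hjD (σ g t₁) (hT'inv g ht₁)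
    have huniv : (Set.univ : Set X) ⊆ D := by
      have hd := (hmin (t₁ j)).closure_eq
      calc (Set.univ : Set X) = closure (Set.range fun g : G => φ g (t₁ j)) :=
            hd.symm
        _ ⊆ closure D := closure_mono horb
        _ = D := hDfin.isClosed.closure_eq
    exact Set.infinite_univ (hDfin.subset huniv)
  -- conclude
  obtain ⟨t, htT', htC⟩ := key
  have htA₀ : t ∈ A₀ := hT'A₀ htT'
  rw [mem_closure_iff_seq_limit] at htA₀
  obtain ⟨y, hymem, hytend⟩ := htA₀
  choose g hg using hymem
  refine ⟨g, Set.range t, Set.finite_range t, Set.range_nonempty t, ?_, ?_⟩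
  · -- Hausdorff distance convergence
    have himg : ∀ n, φ (g n) '' F = Set.range (σ (g n) a) := by
      intro n
      ext x
      constructor
      · rintro ⟨z, hz, rfl⟩
        exact ⟨⟨z, hz⟩, rfl⟩
      · rintro ⟨i, rfl⟩
        exact ⟨a i, i.2, rfl⟩
    have hcoord : ∀ i, Tendsto (fun n => σ (g n) a i) atTop (nhds (t i)) := by
      intro i
      have := tendsto_pi_nhds.1 hytend i
      simpa only [hg] using this
    have hdist : ∀ i : ↥F,
        Tendsto (fun n => dist (σ (g n) a i) (t i)) atTop (nhds 0) := by
      intro i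
      exact tendsto_iff_dist_tendsto_zero.1 (hcoord i)
    have hsum : Tendsto (fun n => ∑ i : ↥F, dist (σ (g n) a i) (t i))
        atTop (nhds 0) := by
      have := tendsto_finset_sum Finset.univ (fun i _ => hdist i)
      simpa using this
    apply squeeze_zero (fun n => hausdorffDist_nonneg) _ hsum
    intro n
    rw [himg n]
    apply hausdorffDist_le_of_mem_dist
    · exact Finset.sum_nonneg fun i _ => dist_nonneg
    · rintro _ ⟨i, rfl⟩
      refine ⟨t i, ⟨i, rfl⟩, ?_⟩
      simpa [dist_comm] using Finset.single_le_sum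
        (f := fun i : ↥F => dist (σ (g n) a i) (t i))
        (fun i _ => dist_nonneg) (Finset.mem_univ i)
    · rintro _ ⟨i, rfl⟩
      refine ⟨σ (g n) a i, ⟨i, rfl⟩, ?_⟩
      simpa [dist_comm] using Finset.single_le_sum
        (f := fun i : ↥F => dist (σ (g n) a i) (t i))
        (fun i _ => dist_nonneg) (Finset.mem_univ i)
  · -- K ∩ C = ∅
    ext x
    simp only [Set.mem_inter_iff, Set.mem_empty_iff_false, iff_false, not_and]
    rintro ⟨i, rfl⟩
    exact htC i
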